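/- Let N, n, K, k be natural numbers with k ≤ n < N and K ≤ N. Then, in the real numbers, (K·(K−1)⋯(K−k+1)) · ((N−K)·(N−K−1)⋯(N−K−(n−k)+1)) / (N·(N−1)⋯(N−n+1)) ≤ (N/(N−n))^n · (K/N)^k · ((N−K)/N)^{n−k}. Moreover, if N = n² and n ≥ 2, then (N/(N−n))^n ≤ 4, so the probability of drawing any fixed sequence of n colours without replacement from an urn with N balls of which K are black is at most 4 times the corresponding probability with replacement. -/

import Mathlib

open Finset

lemma falling_prod_bounds (a m : ℕ) :
    0 ≤ ∏ i ∈ Finset.range m, ((a : ℝ) - i) ∧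
      ∏ i ∈ Finset.range m, ((a : ℝ) - i) ≤ (a : ℝ) ^ m := by
  rcases le_or_gt m a with h | h
  · have h0 : ∀ i ∈ Finset.range m, (0:ℝ) ≤ (a:ℝ) - i := by
      intro i hi
      have : i < a := lt_of_lt_of_le (Finset.mem_range.mp hi) h
      have : (i:ℝ) < a := by exact_mod_cast this
      linarith
    refine ⟨Finset.prod_nonneg h0, ?_⟩
    calc ∏ i ∈ Finset.range m, ((a:ℝ) - i)
        ≤ ∏ _i ∈ Finset.range m, (a:ℝ) := by
          refine Finset.prod_le_prod h0 ?_
          intro i hi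
          have : (0:ℝ) ≤ i := by positivity
          linarith
      _ = (a:ℝ) ^ m := by simp
  · have hz : ∏ i ∈ Finset.range m, ((a : ℝ) - i) = 0 :=
      Finset.prod_eq_zero (Finset.mem_range.mpr h) (by simp)
    rw [hz]
    exact ⟨le_refl 0, by positivity⟩

lemma four_bound : ∀ n : ℕ, 2 ≤ n → ((n:ℝ)/((n:ℝ)-1))^n ≤ 4 := by
  intro n hn
  induction n, hn using Nat.le_induction with
  | base => norm_num
  | succ n hn ih =>
    have ha2' : (2:ℝ) ≤ (n:ℝ) := by exact_mod_cast hn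
    set a : ℝ := (n:ℝ) with ha
    have ha2 : (2:ℝ) ≤ a := ha2'
    have ha0 : 0 < a := by linarith
    have ha1 : 0 < a - 1 := by linarith
    have hsq : 0 < a^2 - 1 := by nlinarith
    have hx : (-2:ℝ) ≤ 1/(a^2-1) := le_trans (by norm_num) (by positivity : (0:ℝ) ≤ 1/(a^2-1))
    have hber : 1 + (n:ℝ) * (1/(a^2-1)) ≤ (1 + 1/(a^2-1))^n :=
      one_add_mul_le_pow hx n
    have h1 : 1 + 1/a ≤ 1 + (n:ℝ) * (1/(a^2-1)) := by
      have : 1/a ≤ a/(a^2-1) := by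
        rw [div_le_div_iff₀ ha0 hsq]; nlinarith
      have heq : (n:ℝ) * (1/(a^2-1)) = a/(a^2-1) := by rw [← ha]; ring
      linarith
    have heq : (1 + 1/(a^2-1)) = (a/(a-1)) * (a/(a+1)) := by
      field_simp; ring
    have hgoalcast : ((↑(n+1):ℝ)/((↑(n+1):ℝ)-1))^(n+1) = ((a+1)/a)^(n+1) := by
      push_cast; rw [← ha]; ring_nf
    rw [hgoalcast]
    have hfrac : 0 < (a+1)/a := by positivity
    calc ((a+1)/a)^(n+1)
        = ((a+1)/a)^n * ((a+1)/a) := by ring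
      _ ≤ ((a+1)/a)^n * (1 + (n:ℝ) * (1/(a^2-1))) := by
          have h2 : (a+1)/a = 1 + 1/a := by field_simp
          exact mul_le_mul_of_nonneg_left (by rw [h2]; exact h1) (by positivity)
      _ ≤ ((a+1)/a)^n * (1 + 1/(a^2-1))^n := by
          refine mul_le_mul_of_nonneg_left hber (by positivity)
      _ = (a/(a-1))^n := by
          rw [← mul_pow, heq]
          congr 1
          field_simp
      _ ≤ 4 := ih

/-- Sampling `n` balls without replacement from an urn with `N` balls, `K` of
them black, is (pointwise on sequences) dominated by sampling with replacement,
up to a factor `(N/(N−n))^n`; moreover this factor is at most `4` when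
`N = n²` and `n ≥ 2`. The products are real falling factorials. -/
theorem without_replacement_le_with_replacement (N n K k : ℕ)
    (hkn : k ≤ n) (hnN : n < N) (hKN : K ≤ N) :
    ((∏ i ∈ Finset.range k, ((K : ℝ) - i)) *
        (∏ i ∈ Finset.range (n - k), (((N - K : ℕ) : ℝ) - i))) /
      (∏ i ∈ Finset.range n, ((N : ℝ) - i)) ≤
      ((N : ℝ) / ((N : ℝ) - (n : ℝ))) ^ n *
        ((K : ℝ) / (N : ℝ)) ^ k *
        ((((N - K : ℕ) : ℝ)) / (N : ℝ)) ^ (n - k) ∧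
    (N = n ^ 2 → 2 ≤ n → ((N : ℝ) / ((N : ℝ) - (n : ℝ))) ^ n ≤ 4) := by
  have hN0 : (0:ℝ) < N := by exact_mod_cast Nat.zero_lt_of_lt hnN
  have hNn : (0:ℝ) < (N:ℝ) - n := by
    have : (n:ℝ) < N := by exact_mod_cast hnN
    linarith
  constructor
  · obtain ⟨hA0, hA⟩ := falling_prod_bounds K k
    obtain ⟨hB0, hB⟩ := falling_prod_bounds (N - K) (n - k)
    have hD : ((N:ℝ) - n)^n ≤ ∏ i ∈ Finset.range n, ((N : ℝ) - i) := by
      calc ((N:ℝ)-n)^n = ∏ _i ∈ Finset.range n, ((N:ℝ) - n) := by simp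
        _ ≤ ∏ i ∈ Finset.range n, ((N : ℝ) - i) := by
            refine Finset.prod_le_prod (fun i _ => hNn.le) ?_
            intro i hi
            have : (i:ℝ) ≤ n := by
              exact_mod_cast (Finset.mem_range.mp hi).le
            linarith
    have hRHS : ((N : ℝ) / ((N : ℝ) - (n : ℝ))) ^ n *
        ((K : ℝ) / (N : ℝ)) ^ k * ((((N - K : ℕ) : ℝ)) / (N : ℝ)) ^ (n - k)
        = ((K:ℝ)^k * (((N - K : ℕ):ℝ))^(n-k)) / (((N:ℝ) - n)^n) := by
      have hsplit : (N:ℝ)^n = (N:ℝ)^k * (N:ℝ)^(n-k) := by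
        rw [← pow_add, Nat.add_sub_cancel' hkn]
      rw [div_pow, div_pow, div_pow]
      rw [hsplit]
      field_simp
    rw [hRHS]
    refine div_le_div₀ (by positivity) ?_ (by positivity) hD
    exact mul_le_mul hA hB hB0 (by positivity)
  · intro hN hn2
    have hcast : ((N : ℝ) / ((N : ℝ) - (n : ℝ))) = (n:ℝ)/((n:ℝ)-1) := by
      subst hN
      have hn1 : (1:ℝ) < n := by exact_mod_cast (by omega : 1 < n)
      push_cast
      rw [show ((n:ℝ)^2 - n) = n * (n - 1) by ring]
      rw [sq, mul_div_mul_left _ _ (by linarith : (n:ℝ) ≠ 0)]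
    rw [hcast]
    exact four_bound n hn2
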